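/- arXiv:2310.20179 — 2 statements merged into one kernel-verified Lean document; each statement's English description precedes it below -/
import Mathlib

section
/- Let s ≥ 2 be an integer, q = 2^s, m ≥ 2 an integer with m ≡ 2 (mod 4), and n = q^m − 1. Then the minimum distance of C_{(q,m;1)} satisfies: d(C_{(q,m;1)}) ≥ (q+2)/2 if m = 2, and d(C_{(q,m;1)}) ≥ q^{(m−2)/2} + 2q − 1 if m ≥ 6. -/
open Finset

/-- The `q`-weight of a nonnegative integer: the sum of its base-`q` digits. -/
def qWeight (q i : ℕ) : ℕ := (Nat.digits q i).sum

/-- The set `T_{(q,m;j)} = {i : 1 ≤ i ≤ q^m − 2, wt_q(i) ≡ j (mod 2)}`. -/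
def Tset (q m j : ℕ) : Set ℕ :=
  {i | 1 ≤ i ∧ i ≤ q ^ m - 2 ∧ qWeight q i % 2 = j}

/-- The cyclic code of length `n` over `F` with defining set `T` with respect to `β ∈ E`:
all words `(c_0, …, c_{n-1})` with `∑_j c_j β^{k j} = 0` for every `k ∈ T`. -/
def cyclicCode (F E : Type*) [Field F] [Field E] [Algebra F E]
    (n : ℕ) (β : E) (T : Set ℕ) : Submodule F (Fin n → F) where
  carrier := {c | ∀ k ∈ T, ∑ j : Fin n, algebraMap F E (c j) * β ^ (k * (j : ℕ)) = 0}
  add_mem' := by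
    intro a b ha hb k hk
    simp only [Set.mem_setOf_eq, Pi.add_apply, map_add, add_mul] at *
    rw [Finset.sum_add_distrib, ha k hk, hb k hk, add_zero]
  zero_mem' := by
    intro k hk
    simp
  smul_mem' := by
    intro r c hc k hk
    simp only [Set.mem_setOf_eq, Pi.smul_apply, smul_eq_mul, map_mul, mul_assoc] at *
    rw [← Finset.mul_sum, hc k hk, mul_zero]

/-- The minimum distance of a code: the least Hamming weight of a nonzero codeword. -/
noncomputable def minDist {F : Type*} [Field F] [DecidableEq F] {n : ℕ}
    (C : Submodule F (Fin n → F)) : ℕ :=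
  sInf {w | ∃ c ∈ C, c ≠ 0 ∧ hammingNorm c = w}



lemma qW_zero (q : ℕ) : qWeight q 0 = 0 := by simp [qWeight]

lemma qW_horner {q : ℕ} (hq : 2 ≤ q) {d : ℕ} (hd : d < q) (x : ℕ) :
    qWeight q (d + q * x) = d + qWeight q x := by
  rcases Nat.eq_zero_or_pos (d + q * x) with h | h
  · obtain ⟨hd0, hqx⟩ := Nat.add_eq_zero.mp h
    rcases Nat.mul_eq_zero.mp hqx with h' | h'
    · omega
    · simp [hd0, h', qW_zero]
  · unfold qWeight
    rw [Nat.digits_def' (by omega : 1 < q) h]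
    have h1 : (d + q * x) % q = d := by
      rw [Nat.add_mul_mod_self_left, Nat.mod_eq_of_lt hd]
    have h2 : (d + q * x) / q = x := by
      rw [Nat.add_mul_div_left _ _ (by omega : 0 < q), Nat.div_eq_of_lt hd, zero_add]
    rw [h1, h2, List.sum_cons]

lemma qW_small {q : ℕ} (hq : 2 ≤ q) {d : ℕ} (hd : d < q) : qWeight q d = d := by
  have := qW_horner hq hd 0
  simpa [qW_zero] using this

lemma qW_pow_mul {q : ℕ} (hq : 2 ≤ q) (j : ℕ) : ∀ r x : ℕ, r < q ^ j →
    qWeight q (r + q ^ j * x) = qWeight q r + qWeight q x := by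
  induction j with
  | zero =>
    intro r x hr
    have : r = 0 := by simpa using hr
    subst this
    simp [qW_zero]
  | succ j ih =>
    intro r x hr
    have hq0 : 0 < q := by omega
    have hrq : r / q < q ^ j := by
      rw [Nat.div_lt_iff_lt_mul hq0]
      calc r < q ^ (j + 1) := hr
        _ = q ^ j * q := pow_succ q j
    have hstep : q * (r / q + q ^ j * x) = q * (r / q) + q ^ (j + 1) * x := by
      rw [Nat.mul_add, ← mul_assoc, ← pow_succ']
    have hkey : r % q + q * (r / q + q ^ j * x) = r + q ^ (j + 1) * x := by
      rw [hstep, ← add_assoc, Nat.mod_add_div]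
    rw [← hkey, qW_horner hq (Nat.mod_lt r hq0) _, ih (r / q) x hrq]
    have hr' : qWeight q r = r % q + qWeight q (r / q) := by
      conv_lhs => rw [← Nat.mod_add_div r q]
      rw [qW_horner hq (Nat.mod_lt r hq0) _]
    omega

lemma qW_pow_sub_one {q : ℕ} (hq : 2 ≤ q) (j : ℕ) :
    qWeight q (q ^ j - 1) = j * (q - 1) := by
  induction j with
  | zero => simp [qW_zero]
  | succ j ih =>
    have h1 : 1 ≤ q ^ j := Nat.one_le_pow _ _ (by omega)
    have hkey : q ^ (j + 1) - 1 = (q - 1) + q * (q ^ j - 1) := by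
      zify [h1, (by omega : 1 ≤ q), Nat.one_le_pow (j + 1) q (by omega)]
      ring
    rw [hkey, qW_horner hq (by omega) _, ih]
    ring


lemma coprime_step {q e m : ℕ} (hq : 2 ≤ q) (hqeven : q % 2 = 0)
    (heeven : e % 2 = 0) (he2 : 2 ≤ e) (hm : m = 2 * e + 2) :
    Nat.Coprime (q ^ e + 1) (q ^ m - 1) := by
  have h1e : 1 ≤ q ^ e := Nat.one_le_pow _ _ (by omega)
  have h12e : 1 ≤ q ^ (2 * e) := Nat.one_le_pow _ _ (by omega)
  have h1m : 1 ≤ q ^ m := Nat.one_le_pow _ _ (by omega)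
  have hq2m : q ^ 2 ≤ q ^ m := Nat.pow_le_pow_right (by omega) (by omega)
  set d := Nat.gcd (q ^ e + 1) (q ^ m - 1) with hd
  have hdvd0 : d ∣ q ^ e + 1 := Nat.gcd_dvd_left _ _
  have hdvd1 : d ∣ q ^ m - 1 := Nat.gcd_dvd_right _ _
  have h1 : (q ^ e + 1) ∣ q ^ (2 * e) - 1 := by
    have hpow : q ^ (2 * e) = q ^ e * q ^ e := by rw [two_mul, pow_add]
    have : q ^ (2 * e) - 1 = (q ^ e + 1) * (q ^ e - 1) := by
      rw [hpow]
      zify [h1e, Nat.one_le_iff_ne_zero.mpr (by positivity : q ^ e * q ^ e ≠ 0)]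
      ring
    rw [this]
    exact Dvd.intro _ rfl
  have h3 : q ^ 2 * (q ^ (2 * e) - 1) = q ^ m - q ^ 2 := by
    have hqm : q ^ m = q ^ 2 * q ^ (2 * e) := by rw [hm, pow_add, mul_comm]
    rw [hqm]
    zify [h12e, Nat.le_mul_of_pos_right (q ^ 2) (by positivity : 0 < q ^ (2 * e))]
    ring
  have h2 : d ∣ q ^ m - q ^ 2 := by
    rw [← h3]
    exact Dvd.dvd.mul_left (hdvd0.trans h1) _
  have h4 : d ∣ q ^ 2 - 1 := by
    have hsub := Nat.dvd_sub hdvd1 h2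
    have heq : (q ^ m - 1) - (q ^ m - q ^ 2) = q ^ 2 - 1 := by omega
    rwa [heq] at hsub
  have h5 : (q ^ 2 - 1) ∣ q ^ e - 1 := by
    obtain ⟨f, hf⟩ : ∃ f, e = 2 * f := ⟨e / 2, by omega⟩
    have := Nat.sub_dvd_pow_sub_pow (q ^ 2) 1 f
    rw [one_pow, ← pow_mul] at this
    rw [hf]
    exact this
  have h6 : d ∣ 2 := by
    have hsub := Nat.dvd_sub hdvd0 (h4.trans h5)
    have heq : (q ^ e + 1) - (q ^ e - 1) = 2 := by omega
    rwa [heq] at hsub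
  have hodd : q ^ m % 2 = 0 := by
    rw [Nat.pow_mod, hqeven, Nat.zero_pow (by omega : 0 < m)]
  rcases (Nat.dvd_prime Nat.prime_two).mp h6 with h | h
  · exact h
  · exfalso
    obtain ⟨k, hk⟩ := hdvd1
    rw [h] at hk
    omega

open Matrix in
lemma bch_bound {F E : Type*} [Field F] [DecidableEq F] [Field E] [Algebra F E]
    {n : ℕ} (hn : 0 < n) {β : E} (hβ : orderOf β = n)
    {T : Set ℕ} {a c L : ℕ} (hc : Nat.Coprime c n)
    (hAP : ∀ t, t < L → a + t * c ∈ T)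
    {x : Fin n → F} (hx : x ∈ cyclicCode F E n β T) (hx0 : x ≠ 0) :
    L < hammingNorm x := by
  classical
  by_contra hcon
  push_neg at hcon
  have hx' : ∀ k ∈ T, ∑ j : Fin n, algebraMap F E (x j) * β ^ (k * (j : ℕ)) = 0 := hx
  have hβn : β ^ n = 1 := by rw [← hβ]; exact pow_orderOf_eq_one β
  have hβ0 : β ≠ 0 := by
    intro h
    rw [h, zero_pow (by omega : n ≠ 0)] at hβn
    exact one_ne_zero hβn.symm
  set s : Finset (Fin n) := Finset.univ.filter (fun i => x i ≠ 0) with hs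
  set w := hammingNorm x with hw
  have hcard : s.card = w := rfl
  have hw0 : 0 < w := by
    rcases Nat.eq_zero_or_pos w with h | h
    · exact absurd (hammingNorm_eq_zero.mp h) hx0
    · exact h
  have hsc : Fintype.card {i // i ∈ s} = w := by rw [Fintype.card_coe]; exact hcard
  let e : Fin w ≃ {i // i ∈ s} := (Fintype.equivFinOfCardEq hsc).symm
  set f : Fin w → E := fun i => β ^ (c * (((e i : Fin n)) : ℕ)) with hf
  set y : Fin w → E := fun i =>
    algebraMap F E (x (e i)) * β ^ (a * (((e i : Fin n)) : ℕ)) with hy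
  have hinj : Function.Injective f := by
    intro i j hij
    apply e.injective
    apply Subtype.ext
    set u : Eˣ := Units.mk0 β hβ0 with hu
    have hou : orderOf u = n := by rw [← hβ, ← orderOf_units]; rfl
    have huij : u ^ (c * (((e i : Fin n)) : ℕ)) = u ^ (c * (((e j : Fin n)) : ℕ)) := by
      ext
      push_cast [Units.val_pow_eq_pow_val]
      exact hij
    have hmod := pow_eq_pow_iff_modEq.mp huij
    rw [hou] at hmod
    have hmod2 := Nat.ModEq.cancel_left_of_coprime hc.symm hmod
    have h1 : (((e i : Fin n)) : ℕ) = (((e j : Fin n)) : ℕ) := by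
      have := hmod2
      unfold Nat.ModEq at this
      rwa [Nat.mod_eq_of_lt (Fin.is_lt _), Nat.mod_eq_of_lt (Fin.is_lt _)] at this
    exact Fin.ext h1
  have hrow : ∀ t : Fin w, ∑ i : Fin w, f i ^ (t : ℕ) * y i = 0 := by
    intro t
    have htL : (t : ℕ) < L := lt_of_lt_of_le t.is_lt hcon
    have hk := hx' (a + (t : ℕ) * c) (hAP _ htL)
    have hterm : ∀ i : Fin w, f i ^ (t : ℕ) * y i =
        algebraMap F E (x (e i)) * β ^ ((a + (t : ℕ) * c) * (((e i : Fin n)) : ℕ)) := by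
      intro i
      rw [hf, hy]
      simp only
      rw [← pow_mul]
      have hexp : (a + (t : ℕ) * c) * (((e i : Fin n)) : ℕ) =
          a * (((e i : Fin n)) : ℕ) + c * (((e i : Fin n)) : ℕ) * (t : ℕ) := by ring
      rw [hexp, pow_add]
      ring
    rw [Finset.sum_congr rfl (fun i _ => hterm i)]
    have hsum : ∑ j : Fin n, algebraMap F E (x j) * β ^ ((a + (t : ℕ) * c) * (j : ℕ))
        = ∑ j ∈ s, algebraMap F E (x j) * β ^ ((a + (t : ℕ) * c) * (j : ℕ)) := by
      symm
      apply Finset.sum_subset (Finset.subset_univ _)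
      intro j _ hj
      have hxj : x j = 0 := by
        by_contra h
        exact hj (Finset.mem_filter.mpr ⟨Finset.mem_univ _, h⟩)
      simp [hxj]
    have hsum2 : ∑ j ∈ s, algebraMap F E (x j) * β ^ ((a + (t : ℕ) * c) * (j : ℕ))
        = ∑ i : Fin w, algebraMap F E (x (e i)) * β ^ ((a + (t : ℕ) * c) * (((e i : Fin n)) : ℕ)) := by
      rw [← Finset.sum_attach s (fun j => algebraMap F E (x j) * β ^ ((a + (t : ℕ) * c) * (j : ℕ)))]
      rw [← Finset.univ_eq_attach]
      exact (Fintype.sum_equiv e _ _ (fun i => rfl)).symm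
    rw [← hsum2, ← hsum]
    exact hk
  have hy0 : y = 0 := by
    apply Matrix.eq_zero_of_mulVec_eq_zero (M := (Matrix.vandermonde f)ᵀ)
    · rw [Matrix.det_transpose]
      exact Matrix.det_vandermonde_ne_zero_iff.mpr hinj
    · funext t
      show ∑ i, (Matrix.vandermonde f)ᵀ t i * y i = 0
      simp only [Matrix.transpose_apply, Matrix.vandermonde_apply]
      exact hrow t
  have hne : y ⟨0, hw0⟩ ≠ 0 := by
    apply mul_ne_zero
    · have hxi : x (e ⟨0, hw0⟩) ≠ 0 := (Finset.mem_filter.mp (e ⟨0, hw0⟩).2).2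
      intro h
      exact hxi (RingHom.injective (algebraMap F E) (by rw [h, _root_.map_zero]))
    · exact pow_ne_zero _ hβ0
  exact hne (congrFun hy0 _)

lemma minDist_ge_of_AP {F E : Type*} [Field F] [DecidableEq F] [Field E] [Algebra F E]
    {n : ℕ} (hn : 0 < n) {β : E} (hβ : orderOf β = n)
    {T : Set ℕ} (hT : ∀ k ∈ T, 1 ≤ k ∧ k < n)
    {a c L : ℕ} (hc : Nat.Coprime c n)
    (hAP : ∀ t, t < L → a + t * c ∈ T) :
    L + 1 ≤ minDist (cyclicCode F E n β T) := by
  have hβn : β ^ n = 1 := by rw [← hβ]; exact pow_orderOf_eq_one β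
  have hones : (fun _ : Fin n => (1 : F)) ∈ cyclicCode F E n β T := by
    intro k hk
    obtain ⟨hk1, hk2⟩ := hT k hk
    have hne1 : β ^ k ≠ 1 := by
      intro h
      have hdvd := orderOf_dvd_of_pow_eq_one h
      rw [hβ] at hdvd
      exact absurd (Nat.le_of_dvd (by omega) hdvd) (by omega)
    have hsum : ∑ j : Fin n, (β ^ k) ^ (j : ℕ) = 0 := by
      rw [Fin.sum_univ_eq_sum_range (fun j => (β ^ k) ^ j) n]
      have hg := geom_sum_mul (β ^ k) n
      rw [← pow_mul, mul_comm k n, pow_mul, hβn, one_pow, sub_self] at hg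
      rcases mul_eq_zero.mp hg with h | h
      · exact h
      · exact absurd (sub_eq_zero.mp h) hne1
    calc ∑ j : Fin n, algebraMap F E 1 * β ^ (k * (j : ℕ))
        = ∑ j : Fin n, (β ^ k) ^ (j : ℕ) := by
          apply Finset.sum_congr rfl
          intro j _
          rw [map_one, one_mul, ← pow_mul]
      _ = 0 := hsum
  have honesne : (fun _ : Fin n => (1 : F)) ≠ 0 := by
    intro h
    have := congrFun h ⟨0, hn⟩
    simp at this
  unfold minDist
  refine le_csInf ⟨hammingNorm (fun _ : Fin n => (1 : F)), ?_⟩ ?_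
  · exact ⟨(fun _ : Fin n => (1 : F)), hones, honesne, rfl⟩
  rintro b ⟨x, hxmem, hx0, rfl⟩
  exact bch_bound hn hβ hc hAP hxmem hx0

lemma ap_mem {q e m : ℕ} (hq : 4 ≤ q) (hqeven : q % 2 = 0) (he : 2 ≤ e) (hm : m = 2 * e + 2)
    (t : ℕ) (ht : t < q ^ e + 2 * q - 2) :
    q ^ (m - 1) + q ^ (m - 2) + (q ^ e - q) * q ^ e + (q ^ e - q + 1) + t * (q ^ e + 1)
      ∈ Tset q m 1 := by
  have hq2 : 2 ≤ q := by omega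
  have hm1 : m - 1 = 2 * e + 1 := by omega
  have hm2 : m - 2 = 2 * e := by omega
  have hqP : q ≤ q ^ e := Nat.le_self_pow (by omega) q
  have hP1 : 1 ≤ q ^ e := by omega
  have hPP : q ^ e * q ^ e = q ^ (m - 2) := by rw [hm2, two_mul, pow_add]
  refine ⟨?_, ?_, ?_⟩
  · -- 1 ≤ x
    calc (1 : ℕ) ≤ q ^ e - q + 1 := Nat.le_add_left 1 _
      _ ≤ q ^ (m - 1) + q ^ (m - 2) + (q ^ e - q) * q ^ e + (q ^ e - q + 1) :=
          Nat.le_add_left _ _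
      _ ≤ _ := Nat.le_add_right _ _
  · -- x ≤ q ^ m - 2
    have e1 : q ^ (m - 1) = q * q ^ (m - 2) := by rw [hm1, hm2, pow_succ']
    have e2 : q ^ m = q * q ^ (m - 1) := by
      rw [hm1, hm]
      exact pow_succ' q (2 * e + 1)
    have hsub : (q ^ e - q) * q ^ e ≤ q ^ e * q ^ e := Nat.mul_le_mul_right _ (Nat.sub_le _ _)
    have ht' : t ≤ q ^ e + 2 * q - 3 := by omega
    have htb : t * (q ^ e + 1) ≤ (q ^ e + 2 * q - 3) * (q ^ e + 1) :=
      Nat.mul_le_mul_right _ ht'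
    have h3 : q ^ e + 2 * q - 3 ≤ 3 * q ^ e := by omega
    have h4 : q ^ e + 1 ≤ 2 * q ^ e := by omega
    have h5 : (q ^ e + 2 * q - 3) * (q ^ e + 1) ≤ 3 * q ^ e * (2 * q ^ e) :=
      Nat.mul_le_mul h3 h4
    have h6 : 3 * q ^ e * (2 * q ^ e) = 6 * (q ^ e * q ^ e) := by ring
    have hPle : q ^ e ≤ q ^ e * q ^ e := Nat.le_mul_of_pos_left _ (by omega)
    have hd : q ^ e - q + 1 ≤ q ^ e := by omega
    -- now linear in atoms W := q^e*q^e etc, with e1, e2, hPP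
    have hW16 : 16 ≤ q ^ e * q ^ e := by
      calc (16 : ℕ) = 4 * 4 := rfl
        _ ≤ q ^ e * q ^ e := Nat.mul_le_mul (by omega) (by omega)
    have hqW : q * (q ^ e * q ^ e) + 12 * (q ^ e * q ^ e) ≤ q * (q * (q ^ e * q ^ e)) := by
      have : 4 * (q * (q ^ e * q ^ e)) ≤ q * (q * (q ^ e * q ^ e)) :=
        Nat.mul_le_mul_right _ hq
      have h12 : 12 * (q ^ e * q ^ e) ≤ 3 * (q * (q ^ e * q ^ e)) := by
        calc 12 * (q ^ e * q ^ e) = 3 * (4 * (q ^ e * q ^ e)) := by ring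
          _ ≤ 3 * (q * (q ^ e * q ^ e)) := by
              apply Nat.mul_le_mul_left
              exact Nat.mul_le_mul_right _ hq
      omega
    rw [e2, e1, ← hPP]
    omega
  · -- parity
    rcases lt_or_ge t (q - 1) with hcase | hcase
    · -- case A : t < q - 1
      obtain ⟨e', rfl⟩ : ∃ e', e = e' + 1 := ⟨e - 1, by omega⟩
      set u := q - 1 - t with hu
      have hu1 : 1 ≤ u := by omega
      have hu2 : u ≤ q - 1 := by omega
      have hmul : q * (q ^ e' - 1) = q ^ (e' + 1) - q := by
        have h1 : 1 ≤ q ^ e' := Nat.one_le_pow _ _ (by omega)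
        zify [h1, (Nat.le_self_pow (by omega) q : q ≤ q ^ (e' + 1))]
        rw [pow_succ]
        push_cast
        ring
      obtain ⟨A, hA⟩ : ∃ A, q ^ (e' + 1) = A + q := ⟨q ^ (e' + 1) - q, by omega⟩
      obtain ⟨B, hB⟩ : ∃ B, q ^ (e' + 1) = B + 1 + u := ⟨q ^ (e' + 1) - 1 - u, by omega⟩
      have hX0' : (q - u) + q * (q ^ e' - 1) = B + 1 := by omega
      have hX1' : (q - u - 1) + q * (q ^ e' - 1) = B := by omega
      have hL1 : q ^ (e' + 1) - q = A := by omega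
      have hkey : q ^ (m - 1) + q ^ (m - 2) + (q ^ (e' + 1) - q) * q ^ (e' + 1) +
          (q ^ (e' + 1) - q + 1) + t * (q ^ (e' + 1) + 1)
          = ((q - u) + q * (q ^ e' - 1)) +
            q ^ (e' + 1) * (((q - u - 1) + q * (q ^ e' - 1)) + q ^ (e' + 1) * (1 + q * 1)) := by
        rw [hm1, hm2, hX0', hX1', hL1]
        have htn : t + u + 1 = q := by omega
        zify
        have hAz : (q : ℤ) ^ (e' + 1) = A + q := by exact_mod_cast hA
        have hBz : (q : ℤ) ^ (e' + 1) = B + 1 + u := by exact_mod_cast hB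
        have htz : (t : ℤ) + u + 1 = q := by exact_mod_cast htn
        linear_combination ((q : ℤ) ^ (e' + 1) + 1) * (hBz - hAz + htz)
      rw [hkey]
      rw [qW_pow_mul hq2 (e' + 1) _ _ (by omega : (q - u) + q * (q ^ e' - 1) < q ^ (e' + 1))]
      rw [qW_pow_mul hq2 (e' + 1) _ _ (by omega : (q - u - 1) + q * (q ^ e' - 1) < q ^ (e' + 1))]
      rw [qW_horner hq2 (by omega : q - u < q) _]
      rw [qW_horner hq2 (by omega : q - u - 1 < q) _]
      rw [qW_horner hq2 (by omega : 1 < q) _]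
      rw [qW_pow_sub_one hq2, qW_small hq2 (by omega : 1 < q)]
      generalize e' * (q - 1) = g
      omega
    · rcases lt_or_ge t (q - 1 + q ^ e) with hcase2 | hcase2
      · -- case B
        set k := t - (q - 1) with hk
        have hkP : k < q ^ e := by omega
        have hkey : q ^ (m - 1) + q ^ (m - 2) + (q ^ e - q) * q ^ e +
            (q ^ e - q + 1) + t * (q ^ e + 1)
            = k + q ^ e * (k + q ^ e * (2 + q * 1)) := by
          rw [hm1, hm2]
          rw [show t = (q - 1) + k from by omega]
          zify [hqP, (by omega : 1 ≤ q)]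
          ring
        rw [hkey]
        rw [qW_pow_mul hq2 e _ _ hkP]
        rw [qW_pow_mul hq2 e _ _ hkP]
        rw [qW_horner hq2 (by omega : 2 < q) _]
        rw [qW_small hq2 (by omega : 1 < q)]
        generalize qWeight q k = g
        omega
      · -- case C
        set u := t - (q - 1) - q ^ e with hu
        have hu2 : u ≤ q - 2 := by omega
        have hkey : q ^ (m - 1) + q ^ (m - 2) + (q ^ e - q) * q ^ e +
            (q ^ e - q + 1) + t * (q ^ e + 1)
            = u + q ^ e * ((u + 1) + q ^ e * (3 + q * 1)) := by
          rw [hm1, hm2]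
          rw [show t = (q - 1) + q ^ e + u from by omega]
          zify [hqP, (by omega : 1 ≤ q)]
          ring
        rw [hkey]
        rw [qW_pow_mul hq2 e _ _ (by omega : u < q ^ e)]
        rw [qW_pow_mul hq2 e _ _ (by omega : u + 1 < q ^ e)]
        rw [qW_small hq2 (by omega : u < q)]
        rw [qW_horner hq2 (by omega : 3 < q) _]
        rw [qW_small hq2 (by omega : u + 1 < q)]
        rw [qW_small hq2 (by omega : 1 < q)]
        omega

theorem stmt12 (s q m n : ℕ) (hs : 2 ≤ s) (hq : q = 2 ^ s)
    (hm : 2 ≤ m) (hmod4 : m % 4 = 2) (hn : n = q ^ m - 1)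
    (F E : Type*) [Field F] [Fintype F] [DecidableEq F] [Field E] [Fintype E] [Algebra F E]
    (hF : Fintype.card F = q) (hE : Fintype.card E = q ^ m)
    (β : E) (hβ : orderOf β = n) :
    (m = 2 → (q + 2) / 2 ≤ minDist (cyclicCode F E n β (Tset q m 1))) ∧
    (6 ≤ m → q ^ ((m - 2) / 2) + 2 * q - 1 ≤ minDist (cyclicCode F E n β (Tset q m 1))) := by
  have hq2 : 2 ≤ q := by
    rw [hq]
    calc (2:ℕ) = 2 ^ 1 := by norm_num
      _ ≤ 2 ^ s := Nat.pow_le_pow_right (by omega) (by omega)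
  have hq4 : 4 ≤ q := by
    rw [hq]
    calc (4:ℕ) = 2 ^ 2 := by norm_num
      _ ≤ 2 ^ s := Nat.pow_le_pow_right (by omega) hs
  have hqeven : q % 2 = 0 := by
    rw [hq]
    have : (2:ℕ) ∣ 2 ^ s := dvd_pow_self 2 (by omega)
    omega
  have hq2m : 16 ≤ q ^ m := by
    calc (16:ℕ) = 4 ^ 2 := by norm_num
      _ ≤ q ^ 2 := Nat.pow_le_pow_left hq4 2
      _ ≤ q ^ m := Nat.pow_le_pow_right (by omega) hm
  have hn0 : 0 < n := by omega
  have hqmeven : q ^ m % 2 = 0 := by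
    rw [Nat.pow_mod, hqeven, Nat.zero_pow (by omega : 0 < m)]
  have hT : ∀ k ∈ Tset q m 1, 1 ≤ k ∧ k < n := by
    rintro k ⟨h1, h2, _⟩
    exact ⟨h1, by omega⟩
  constructor
  · intro hm2
    subst hm2
    have hcop : Nat.Coprime 2 n := by
      rw [Nat.Prime.coprime_iff_not_dvd Nat.prime_two]
      omega
    have hAP : ∀ t, t < q / 2 → q + t * 2 ∈ Tset q 2 1 := by
      intro t ht
      have h2t : 2 * t < q := by omega
      have h2q : 2 * q ≤ q ^ 2 := by
        have hmul : q * 2 ≤ q * q := Nat.mul_le_mul_left q hq2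
        have hsq : q ^ 2 = q * q := sq q
        omega
      refine ⟨by omega, by omega, ?_⟩
      have heq : q + t * 2 = 2 * t + q * 1 := by ring
      rw [heq, qW_horner hq2 (by omega : 2 * t < q) 1, qW_small hq2 (by omega : 1 < q)]
      omega
    have key := minDist_ge_of_AP (F := F) (E := E) hn0 hβ hT hcop hAP
    omega
  · intro hm6
    obtain ⟨e, he2, heeven, hme⟩ : ∃ e, 2 ≤ e ∧ e % 2 = 0 ∧ m = 2 * e + 2 :=
      ⟨(m - 2) / 2, by omega, by omega, by omega⟩
    have hcop : Nat.Coprime (q ^ e + 1) n := by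
      rw [hn]
      exact coprime_step hq2 hqeven heeven he2 hme
    have hAP : ∀ t, t < q ^ e + 2 * q - 2 →
        (q ^ (m - 1) + q ^ (m - 2) + (q ^ e - q) * q ^ e + (q ^ e - q + 1)) + t * (q ^ e + 1)
          ∈ Tset q m 1 := by
      intro t ht
      exact ap_mem hq4 hqeven he2 hme t ht
    have key := minDist_ge_of_AP (F := F) (E := E) hn0 hβ hT hcop hAP
    have hee : (m - 2) / 2 = e := by omega
    rw [hee]
    have hq1e : 1 ≤ q ^ e := Nat.one_le_pow _ _ (by omega)
    omega
end

section
/- Let s ≥ 1 be an integer, q = 2^s, m ≥ 3 an odd integer, and n = q^m − 1. Then for each i ∈ {0,1}, the code C_{(q,m;i)} has dimension (n+1)/2 as an F-vector space. -/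
open Finset

section AuxLemmas
open Polynomial


lemma qWeight_eq {q : ℕ} (hq : 2 ≤ q) (k : ℕ) :
    qWeight q k = k % q + qWeight q (k / q) := by
  rcases Nat.eq_zero_or_pos k with rfl | hk
  · simp [qWeight]
  · rw [qWeight, Nat.digits_def' hq hk]; simp [qWeight]

lemma qWeight_lt {q : ℕ} (hq : 2 ≤ q) {k : ℕ} (hk : k < q) : qWeight q k = k := by
  rw [qWeight_eq hq, Nat.mod_eq_of_lt hk, Nat.div_eq_of_lt hk]
  simp [qWeight]

lemma mod2_count (p : ℕ) (hp : p < 2) (t : ℕ) :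
    ((Finset.range (2 * t)).filter (fun k => k % 2 = p)).card = t := by
  induction t with
  | zero => simp
  | succ t ih =>
    have h : 2 * (t + 1) = (2 * t + 1) + 1 := by ring
    rw [h, Finset.range_add_one, Finset.range_add_one, Finset.filter_insert, Finset.filter_insert]
    have h1 : (2 * t + 1) % 2 = 1 := by omega
    have h2 : (2 * t) % 2 = 0 := by omega
    interval_cases p
    · rw [if_neg (by omega), if_pos h2,
        Finset.card_insert_of_notMem (by simp [Finset.mem_filter]), ih]
    · rw [if_pos h1, if_neg (by omega),
        Finset.card_insert_of_notMem (by simp [Finset.mem_filter]), ih]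

lemma count_parity {q : ℕ} (hq2 : 2 ≤ q) (hqe : 2 ∣ q) :
    ∀ e, 1 ≤ e → ∀ p, p < 2 →
    ((Finset.range (q ^ e)).filter (fun k => qWeight q k % 2 = p)).card = q ^ e / 2 := by
  intro e
  induction e with
  | zero => omega
  | succ e ih =>
    intro _ p hp
    rcases Nat.eq_zero_or_pos e with rfl | he
    · have hcg : ∀ k ∈ Finset.range (q ^ 1), qWeight q k % 2 = p ↔ k % 2 = p := by
        intro k hk
        rw [pow_one] at hk
        rw [qWeight_lt hq2 (Finset.mem_range.mp hk)]
      rw [Finset.filter_congr hcg, pow_one]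
      obtain ⟨t, rfl⟩ := hqe
      have := mod2_count p hp t
      omega
    · have hq0 : 0 < q := by omega
      rw [Finset.card_eq_sum_card_fiberwise (f := fun k => k % q) (t := Finset.range q)
        (fun x _ => Finset.mem_range.mpr (Nat.mod_lt _ hq0))]
      have key : ∀ d ∈ Finset.range q,
          (((Finset.range (q ^ (e+1))).filter (fun k => qWeight q k % 2 = p)).filter
            (fun k => k % q = d)).card = q ^ e / 2 := by
        intro d hd
        rw [Finset.mem_range] at hd
        have hmod : ∀ r : ℕ, (q * r + d) % q = d := by
          intro r; rw [add_comm, Nat.add_mul_mod_self_left, Nat.mod_eq_of_lt hd]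
        have hdiv : ∀ r : ℕ, (q * r + d) / q = r := by
          intro r; rw [add_comm, Nat.add_mul_div_left _ _ hq0, Nat.div_eq_of_lt hd]; omega
        have hcard : (((Finset.range (q ^ (e+1))).filter (fun k => qWeight q k % 2 = p)).filter
              (fun k => k % q = d)).card
            = ((Finset.range (q ^ e)).filter
                (fun r => qWeight q r % 2 = (p + d) % 2)).card := by
          apply Finset.card_nbij' (i := fun k => k / q) (j := fun r => q * r + d)
          · intro a ha
            simp only [Finset.mem_coe, Finset.mem_filter, Finset.mem_range] at ha ⊢
            obtain ⟨⟨ha1, ha2⟩, ha3⟩ := ha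
            rw [qWeight_eq hq2 a, ha3] at ha2
            rw [pow_succ] at ha1
            exact ⟨Nat.div_lt_iff_lt_mul hq0 |>.mpr (by omega), by omega⟩
          · intro r hr
            simp only [Finset.mem_coe, Finset.mem_filter, Finset.mem_range] at hr ⊢
            obtain ⟨hr1, hr2⟩ := hr
            refine ⟨⟨?_, ?_⟩, hmod r⟩
            · have hmul : (r + 1) * q ≤ q ^ e * q := Nat.mul_le_mul_right q (by omega)
              have hexp : (r + 1) * q = q * r + q := by ring
              rw [pow_succ]
              omega
            · rw [qWeight_eq hq2 (q * r + d), hmod r, hdiv r]; omega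
          · intro a ha
            simp only [Finset.mem_coe, Finset.mem_filter] at ha
            rw [← ha.2]
            exact Nat.div_add_mod a q
          · intro r _
            exact hdiv r
        rw [hcard, ih he ((p + d) % 2) (by omega)]
      rw [Finset.sum_congr rfl key, Finset.sum_const, Finset.card_range, smul_eq_mul, pow_succ]
      obtain ⟨u, hu⟩ := dvd_pow hqe (by omega : e ≠ 0)
      rw [hu]
      rw [Nat.mul_div_cancel_left u (by norm_num), mul_assoc,
        Nat.mul_div_cancel_left (u * q) (by norm_num), mul_comm]

lemma qWeight_pow_sub_one {q : ℕ} (hq : 2 ≤ q) (m : ℕ) :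
    qWeight q (q ^ m - 1) = m * (q - 1) := by
  induction m with
  | zero => simp [qWeight]
  | succ m ih =>
    have hqm : 1 ≤ q ^ m := Nat.one_le_pow _ _ (by omega)
    have hkey : q ^ (m + 1) - 1 = q * (q ^ m - 1) + (q - 1) := by
      have h1 : q ^ (m+1) = q * q ^ m := by rw [pow_succ, mul_comm]
      have h2 : q * (q ^ m - 1) = q * q ^ m - q := by rw [Nat.mul_sub]; omega
      have h3 : q ≤ q * q ^ m := Nat.le_mul_of_pos_right q (by omega)
      omega
    have hmod : (q * (q ^ m - 1) + (q - 1)) % q = q - 1 := by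
      rw [add_comm, Nat.add_mul_mod_self_left, Nat.mod_eq_of_lt (by omega)]
    have hdiv : (q * (q ^ m - 1) + (q - 1)) / q = q ^ m - 1 := by
      rw [add_comm, Nat.add_mul_div_left _ _ (by omega : 0 < q), Nat.div_eq_of_lt (by omega)]
      omega
    rw [hkey, qWeight_eq hq, hmod, hdiv, ih]
    ring

lemma Tcard {q m : ℕ} (hq2 : 2 ≤ q) (hqe : 2 ∣ q) (hm : 1 ≤ m) (hmodd : Odd m)
    (p : ℕ) (hp : p < 2) :
    ((Finset.Icc 1 (q ^ m - 2)).filter (fun k => qWeight q k % 2 = p)).card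
      = q ^ m / 2 - 1 := by
  have hQ : 2 ≤ q ^ m := by
    calc (2:ℕ) = 2 ^ 1 := by norm_num
    _ ≤ 2 ^ m := Nat.pow_le_pow_right (by norm_num) hm
    _ ≤ q ^ m := Nat.pow_le_pow_left hq2 m
  have hsplit : Finset.range (q ^ m)
      = insert 0 (insert (q ^ m - 1) (Finset.Icc 1 (q ^ m - 2))) := by
    ext k
    simp only [Finset.mem_range, Finset.mem_insert, Finset.mem_Icc]
    omega
  have hw0 : qWeight q 0 % 2 = 0 := by simp [qWeight]
  have hwn : qWeight q (q ^ m - 1) % 2 = 1 := by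
    rw [qWeight_pow_sub_one hq2]
    refine Nat.odd_iff.mp (hmodd.mul ?_)
    obtain ⟨t, rfl⟩ := hqe
    exact ⟨t - 1, by omega⟩
  have hcount := count_parity hq2 hqe m hm p hp
  rw [hsplit, Finset.filter_insert, Finset.filter_insert] at hcount
  interval_cases p
  · rw [if_pos hw0, if_neg (by omega)] at hcount
    rw [Finset.card_insert_of_notMem
      (by simp only [Finset.mem_filter, Finset.mem_Icc]; omega)] at hcount
    omega
  · rw [if_neg (by omega), if_pos hwn] at hcount
    rw [Finset.card_insert_of_notMem
      (by simp only [Finset.mem_filter, Finset.mem_Icc]; omega)] at hcount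
    omega

lemma qWeight_mul_pow_add {q : ℕ} (hq : 2 ≤ q) (a : ℕ) :
    ∀ e r, r < q ^ e → qWeight q (a * q ^ e + r) = qWeight q a + qWeight q r := by
  intro e
  induction e with
  | zero =>
    intro r hr
    rw [pow_zero] at hr
    have : r = 0 := by omega
    subst this
    simp [qWeight]
  | succ e ih =>
    intro r hr
    have hq0 : 0 < q := by omega
    have h1 : (a * q ^ (e+1) + r) % q = r % q := by
      rw [pow_succ, ← mul_assoc, add_comm, Nat.add_mul_mod_self_right]
    have h2 : (a * q ^ (e+1) + r) / q = a * q ^ e + r / q := by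
      rw [pow_succ, ← mul_assoc, add_comm, Nat.add_mul_div_right _ _ hq0, add_comm]
    have h3 : r / q < q ^ e := by
      rw [pow_succ] at hr
      exact Nat.div_lt_iff_lt_mul hq0 |>.mpr hr
    rw [qWeight_eq hq (a * q ^ (e+1) + r), h1, h2, ih _ h3, qWeight_eq hq r]
    omega

lemma rot_mem {q m : ℕ} (hq : 2 ≤ q) (hm : 2 ≤ m) {k : ℕ} (hk1 : 1 ≤ k) (hk2 : k ≤ q ^ m - 2) :
    1 ≤ (q * k) % (q ^ m - 1) ∧ (q * k) % (q ^ m - 1) ≤ q ^ m - 2 ∧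
    qWeight q ((q * k) % (q ^ m - 1)) = qWeight q k := by
  have hpow : q ^ m = q ^ (m - 1) * q := by
    rw [← pow_succ]; congr 1; omega
  have hP1 : 1 ≤ q ^ (m - 1) := Nat.one_le_pow _ _ (by omega)
  have hQ2 : q + q ≤ q ^ m := by
    have : 2 * q ≤ q ^ (m-1) * q := Nat.mul_le_mul_right q (by
      calc 2 ≤ q := hq
      _ = q ^ 1 := (pow_one q).symm
      _ ≤ q ^ (m-1) := Nat.pow_le_pow_right (by omega) (by omega))
    omega
  set d := k / q ^ (m - 1) with hd
  set r := k % q ^ (m - 1) with hr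
  have hkdr : q ^ (m - 1) * d + r = k := Nat.div_add_mod k _
  have hrlt : r < q ^ (m - 1) := Nat.mod_lt _ (by omega)
  have hklt : k < q ^ m := by omega
  have hdlt : d < q := by
    rw [hd]
    apply Nat.div_lt_iff_lt_mul (by omega) |>.mpr
    have : q * q ^ (m - 1) = q ^ (m - 1) * q := Nat.mul_comm _ _
    omega
  -- q * k = d * (q ^ m - 1) + (d + q * r)
  have e1 : q * k = d * (q ^ m - 1) + (d + q * r) := by
    have e2 : q * k = d * q ^ m + q * r := by
      rw [← hkdr, hpow]
      ring
    have e3 : d * (q ^ m - 1) + d = d * q ^ m := by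
      rw [Nat.mul_sub]
      have : d ≤ d * q ^ m := Nat.le_mul_of_pos_right d (by omega)
      omega
    omega
  -- bounds on d + q * r
  have hqr_le : q * r ≤ q ^ m - q := by
    have h1 : q * r ≤ q * (q ^ (m-1) - 1) := Nat.mul_le_mul_left q (by omega)
    have h2 : q * (q ^ (m-1) - 1) = q * q ^ (m-1) - q := by
      rw [Nat.mul_sub]; omega
    have h3 : q * q ^ (m-1) = q ^ m := by rw [hpow, mul_comm]
    omega
  have hne : d + q * r ≤ q ^ m - 2 := by
    by_contra hcon
    push_neg at hcon
    -- then d = q - 1 and q * r = q ^ m - q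
    have hd' : d = q - 1 := by omega
    have hqr' : q * r = q ^ m - q := by omega
    have hr' : r = q ^ (m-1) - 1 := by
      have : q * (q ^ (m-1) - 1) = q ^ m - q := by
        rw [Nat.mul_sub, mul_one, hpow, mul_comm]
      apply Nat.eq_of_mul_eq_mul_left (show 0 < q by omega)
      omega
    -- hence k = q ^ m - 1
    have : k = q ^ m - 1 := by
      have h5 : q ^ (m-1) * (q - 1) + q ^ (m-1) = q ^ (m-1) * q := by
        rw [← Nat.mul_succ]; congr 1; omega
      have h6 : q ^ (m-1) ≤ q ^ m := Nat.pow_le_pow_right (by omega) (by omega)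
      rw [← hkdr, hd', hr']
      omega
    omega
  have hpos : 1 ≤ d + q * r := by
    rcases Nat.eq_zero_or_pos d with h0 | h1
    · rw [h0] at hkdr
      simp at hkdr
      have : r ≤ q * r := Nat.le_mul_of_pos_left r (by omega)
      omega
    · omega
  have hmodn : (q * k) % (q ^ m - 1) = d + q * r := by
    rw [e1, mul_comm d (q ^ m - 1), Nat.mul_add_mod, Nat.mod_eq_of_lt (by omega)]
  refine ⟨by omega, by omega, ?_⟩
  rw [hmodn]
  -- qWeight (d + q * r) = d + qWeight r
  have hw1 : qWeight q (d + q * r) = d + qWeight q r := by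
    rw [qWeight_eq hq (d + q * r), Nat.add_mul_mod_self_left, Nat.mod_eq_of_lt hdlt,
      Nat.add_mul_div_left _ _ (show 0 < q by omega), Nat.div_eq_of_lt hdlt, Nat.zero_add]
  have hw2 : qWeight q k = d + qWeight q r := by
    rw [← hkdr, mul_comm, qWeight_mul_pow_add hq d (m-1) r hrlt, qWeight_lt hq hdlt]
  omega


open Polynomial

lemma mem_range_algebraMap_of_pow_card (F E : Type*) [Field F] [Fintype F] [Field E]
    [Algebra F E] (x : E) (hx : x ^ Fintype.card F = x) :
    x ∈ Set.range (algebraMap F E) := by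
  classical
  set Q := Fintype.card F with hQ
  have hQ2 : 2 ≤ Q := Fintype.one_lt_card
  set p : Polynomial E := X ^ Q - X with hp
  have hdeg : p.natDegree = Q := by
    rw [hp, natDegree_sub_eq_left_of_natDegree_lt, natDegree_X_pow]
    rw [natDegree_X_pow, natDegree_X]; omega
  have hp0 : p ≠ 0 := fun h => by simp [h] at hdeg; omega
  set S : Finset E := Finset.univ.image (algebraMap F E) with hS
  have hScard : S.card = Q := by
    rw [hS, Finset.card_image_of_injective _ (algebraMap F E).injective, Finset.card_univ]
  have hSsub : S ⊆ p.roots.toFinset := by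
    intro y hy
    rw [hS, Finset.mem_image] at hy
    obtain ⟨a, -, rfl⟩ := hy
    rw [Multiset.mem_toFinset, mem_roots hp0]
    show p.eval _ = 0
    rw [hp, eval_sub, eval_pow, eval_X, ← map_pow, FiniteField.pow_card, sub_self]
  have hcard : p.roots.toFinset.card ≤ Q :=
    le_trans (Multiset.toFinset_card_le _) (le_trans p.card_roots' (le_of_eq hdeg))
  have hEq : S = p.roots.toFinset := Finset.eq_of_subset_of_card_le hSsub (by omega)
  have hxroot : x ∈ p.roots.toFinset := by
    rw [Multiset.mem_toFinset, mem_roots hp0]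
    show p.eval x = 0
    rw [hp, eval_sub, eval_pow, eval_X, hx, sub_self]
  rw [← hEq, hS, Finset.mem_image] at hxroot
  obtain ⟨a, -, ha⟩ := hxroot
  exact ⟨a, ha⟩


lemma finrank_code {F E : Type*} [Field F] [Field E] [Algebra F E]
    (n : ℕ) (hn0 : 0 < n) (β : E) (T : Set ℕ) (T' : Finset ℕ)
    (hT : ∀ k, k ∈ T ↔ k ∈ T')
    (hinj : Set.InjOn (fun k => β ^ k) ↑T')
    (g₀ : Polynomial F)
    (hg : g₀.map (algebraMap F E) = ∏ k ∈ T', (X - C (β ^ k)))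
    (hdn : T'.card ≤ n) :
    Module.finrank F (cyclicCode F E n β T) = n - T'.card := by
  classical
  have halg : Function.Injective (algebraMap F E) := (algebraMap F E).injective
  set g : Polynomial E := ∏ k ∈ T', (X - C (β ^ k)) with hgdef
  have hgmonic : g.Monic := monic_prod_of_monic _ _ (fun k _ => monic_X_sub_C _)
  have hg₀monic : g₀.Monic := by
    rw [← Polynomial.monic_map_iff (f := algebraMap F E), hg]
    exact hgmonic
  have hg₀ne : g₀ ≠ 0 := hg₀monic.ne_zero
  set d := T'.card with hd
  have hgdeg : g.natDegree = d := by
    rw [hgdef, natDegree_prod_of_monic _ _ (fun k _ => monic_X_sub_C _)]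
    simp only [natDegree_X_sub_C]
    simp [hd]
  have hdeg : g₀.natDegree = d := by
    rw [← hgdeg, ← hg, hg₀monic.natDegree_map]
  set ι := (Polynomial.degreeLTEquiv F (n - d)).symm with hι
  set ψ : (Fin (n - d) → F) →ₗ[F] (Fin n → F) :=
    (LinearMap.pi fun i : Fin n => Polynomial.lcoeff F (i : ℕ)) ∘ₗ
      (LinearMap.mulLeft F g₀) ∘ₗ (Polynomial.degreeLT F (n - d)).subtype ∘ₗ ι.toLinearMap
    with hψdef
  have hψ : ∀ (a : Fin (n-d) → F) (i : Fin n), ψ a i = (g₀ * ((ι a : Polynomial F))).coeff i :=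
    fun a i => rfl
  have hmuldeg : ∀ a : Fin (n-d) → F, (g₀ * (ι a : Polynomial F)).natDegree < n := by
    intro a
    rcases eq_or_ne (ι a : Polynomial F) 0 with h | h
    · rw [h, mul_zero]; simpa using hn0
    · have h1 : (ι a : Polynomial F).natDegree < n - d := by
        have h2 := (ι a).2
        rw [Polynomial.mem_degreeLT] at h2
        exact (natDegree_lt_iff_degree_lt h).mpr h2
      calc (g₀ * (ι a : Polynomial F)).natDegree ≤ g₀.natDegree + (ι a : Polynomial F).natDegree :=
            natDegree_mul_le
        _ < n := by omega
  -- evaluation formula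
  have hevalsum : ∀ (P : Polynomial F), P.natDegree < n → ∀ (c : Fin n → F),
      (∀ i : Fin n, c i = P.coeff i) → ∀ k : ℕ,
      ∑ j : Fin n, algebraMap F E (c j) * β ^ (k * (j : ℕ))
        = (P.map (algebraMap F E)).eval (β ^ k) := by
    intro P hP c hc k
    rw [eval_eq_sum_range' (lt_of_le_of_lt natDegree_map_le hP) (β ^ k)]
    rw [← Fin.sum_univ_eq_sum_range (fun j => (P.map (algebraMap F E)).coeff j * (β ^ k) ^ j) n]
    apply Finset.sum_congr rfl
    intro j _
    rw [hc j, coeff_map, ← pow_mul]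
  have hψinj : Function.Injective ψ := by
    rw [injective_iff_map_eq_zero]
    intro a ha
    have hpoly : g₀ * (ι a : Polynomial F) = 0 := by
      apply Polynomial.ext; intro i
      rw [coeff_zero]
      by_cases hi : i < n
      · have := congrFun ha ⟨i, hi⟩
        rw [hψ a ⟨i, hi⟩] at this
        exact this
      · exact coeff_eq_zero_of_natDegree_lt (lt_of_lt_of_le (hmuldeg a) (by omega))
    have h0 : (ι a : Polynomial F) = 0 := by
      rcases mul_eq_zero.mp hpoly with h | h
      · exact absurd h hg₀ne
      · exact h
    have h1 : ι a = 0 := Subtype.ext h0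
    calc a = ι.symm (ι a) := (ι.symm_apply_apply a).symm
      _ = 0 := by rw [h1]; simp
  have hpair : (↑T' : Set ℕ).Pairwise (Function.onFun IsCoprime fun k => X - C (β ^ k)) := by
    intro k hk k' hk' hne
    exact isCoprime_X_sub_C_of_isUnit_sub
      (isUnit_iff_ne_zero.mpr (sub_ne_zero.mpr (fun h => hne (hinj hk hk' h))))
  have hrange : cyclicCode F E n β T = LinearMap.range ψ := by
    ext c
    constructor
    · intro hc
      have hc' : ∀ k ∈ T', ∑ j : Fin n, algebraMap F E (c j) * β ^ (k * (j : ℕ)) = 0 :=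
        fun k hk => hc k ((hT k).mpr hk)
      set pc := (Polynomial.degreeLTEquiv F n).symm c with hpc
      have hcoeff : ∀ i : Fin n, c i = (pc : Polynomial F).coeff i := by
        intro i
        have := (Polynomial.degreeLTEquiv F n).apply_symm_apply c
        rw [← this]
        rfl
      have hpcdeg : (pc : Polynomial F).degree < n := mem_degreeLT.mp pc.2
      have hroots : ∀ k ∈ T', ((pc : Polynomial F).map (algebraMap F E)).eval (β ^ k) = 0 := by
        intro k hk
        rcases eq_or_ne (pc : Polynomial F) 0 with h | h
        · rw [h]; simp
        · rw [← hevalsum (pc : Polynomial F) ((natDegree_lt_iff_degree_lt h).mpr hpcdeg)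
            c hcoeff k]
          exact hc' k hk
      have hdvd : g ∣ (pc : Polynomial F).map (algebraMap F E) :=
        Finset.prod_dvd_of_coprime hpair
          (fun k hk => dvd_iff_isRoot.mpr (hroots k hk))
      rw [← hg] at hdvd
      obtain ⟨h, hh⟩ := (map_dvd_map _ halg hg₀monic).mp hdvd
      have hmem : h ∈ Polynomial.degreeLT F (n - d) := by
        rw [mem_degreeLT]
        rcases eq_or_ne h 0 with h0 | h0
        · rw [h0, degree_zero]; exact WithBot.bot_lt_coe _
        · have hpcne : (pc : Polynomial F) ≠ 0 := by
            rw [hh]; exact mul_ne_zero hg₀ne h0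
          have : (pc : Polynomial F).natDegree = d + h.natDegree := by
            rw [hh, natDegree_mul hg₀ne h0, hdeg]
          have h2 : (pc : Polynomial F).natDegree < n :=
            (natDegree_lt_iff_degree_lt hpcne).mpr hpcdeg
          exact (natDegree_lt_iff_degree_lt h0).mp (by omega)
      refine ⟨(Polynomial.degreeLTEquiv F (n - d)) ⟨h, hmem⟩, ?_⟩
      funext i
      rw [hψ]
      have : ι ((Polynomial.degreeLTEquiv F (n - d)) ⟨h, hmem⟩) = ⟨h, hmem⟩ :=
        (Polynomial.degreeLTEquiv F (n - d)).symm_apply_apply ⟨h, hmem⟩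
      rw [this]
      rw [hcoeff i, hh]
    · rintro ⟨a, rfl⟩
      intro k hk
      rw [hT] at hk
      rw [hevalsum (g₀ * (ι a : Polynomial F)) (hmuldeg a) _ (fun i => hψ a i) k]
      rw [Polynomial.map_mul, hg, eval_mul, hgdef, eval_prod]
      rw [Finset.prod_eq_zero hk (by rw [eval_sub, eval_X, eval_C, sub_self])]
      rw [zero_mul]
  rw [hrange, LinearMap.finrank_range_of_inj hψinj, Module.finrank_fin_fun]

end AuxLemmas

open Polynomial in
theorem stmt14 (s q m n : ℕ) (hs : 1 ≤ s) (hq : q = 2 ^ s)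
    (hm : 3 ≤ m) (hmodd : Odd m) (hn : n = q ^ m - 1)
    (F E : Type*) [Field F] [Fintype F] [DecidableEq F] [Field E] [Fintype E] [Algebra F E]
    (hF : Fintype.card F = q) (hE : Fintype.card E = q ^ m)
    (β : E) (hβ : orderOf β = n) :
    ∀ j : ℕ, j = 0 ∨ j = 1 →
      Module.finrank F (cyclicCode F E n β (Tset q m j)) = (n + 1) / 2 := by
  intro j hj
  classical
  have hq2 : 2 ≤ q := by
    rw [hq]
    calc (2:ℕ) = 2 ^ 1 := rfl
    _ ≤ 2 ^ s := Nat.pow_le_pow_right (by norm_num) hs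
  have hqe : 2 ∣ q := by rw [hq]; exact dvd_pow_self 2 (by omega)
  have hQ : 8 ≤ q ^ m := by
    calc (8:ℕ) = 2 ^ 3 := by norm_num
    _ ≤ 2 ^ m := Nat.pow_le_pow_right (by norm_num) hm
    _ ≤ q ^ m := Nat.pow_le_pow_left hq2 m
  have hQeven : 2 ∣ q ^ m := hqe.trans (dvd_pow_self q (by omega))
  have hn0 : 0 < n := by omega
  have hj2 : j < 2 := by omega
  set T' : Finset ℕ := (Finset.Icc 1 (q ^ m - 2)).filter (fun k => qWeight q k % 2 = j)
    with hT'
  have hTmem : ∀ k, k ∈ T' ↔ (1 ≤ k ∧ k ≤ q ^ m - 2) ∧ qWeight q k % 2 = j := by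
    intro k; rw [hT', Finset.mem_filter, Finset.mem_Icc]
  have hT : ∀ k, k ∈ Tset q m j ↔ k ∈ T' := by
    intro k
    rw [hTmem]
    constructor
    · rintro ⟨h1, h2, h3⟩; exact ⟨⟨h1, h2⟩, h3⟩
    · rintro ⟨⟨h1, h2⟩, h3⟩; exact ⟨h1, h2, h3⟩
  have hcard : T'.card = q ^ m / 2 - 1 := Tcard hq2 hqe (by omega) hmodd j hj2
  have hinj : Set.InjOn (fun k => β ^ k) ↑T' := by
    intro k hk k' hk' hEq
    rw [Finset.mem_coe, hTmem] at hk hk'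
    exact pow_injOn_Iio_orderOf (by rw [hβ]; exact Set.mem_Iio.mpr (by omega))
      (by rw [hβ]; exact Set.mem_Iio.mpr (by omega)) hEq
  -- characteristic
  have hchar2 : ringChar E = 2 := by
    obtain ⟨kk, hprime, hcardE⟩ := FiniteField.card E (ringChar E)
    rw [hE, hq, ← pow_mul] at hcardE
    have hdvd : ringChar E ∣ 2 ^ (s * m) := by
      rw [hcardE]
      exact dvd_pow_self _ kk.2.ne'
    exact (Nat.prime_dvd_prime_iff_eq hprime Nat.prime_two).mp
      (hprime.dvd_of_dvd_pow hdvd)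
  haveI hcharE : CharP E 2 := hchar2 ▸ ringChar.charP E
  haveI : ExpChar E 2 := ExpChar.prime Nat.prime_two
  set φ := iterateFrobenius E 2 s with hφ
  have hφx : ∀ x : E, φ x = x ^ q := by
    intro x; rw [hφ, iterateFrobenius_def, ← hq]
  set g : Polynomial E := ∏ k ∈ T', (X - C (β ^ k)) with hgdef
  have hσmem : ∀ k ∈ T', (q * k) % n ∈ T' := by
    intro k hk
    rw [hTmem] at hk ⊢
    obtain ⟨⟨h1, h2⟩, h3⟩ := hk
    obtain ⟨e1, e2, e3⟩ := rot_mem hq2 (by omega) h1 h2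
    rw [hn]
    exact ⟨⟨e1, e2⟩, by rw [e3]; exact h3⟩
  have hσinj : ∀ k ∈ T', ∀ k' ∈ T', (q * k) % n = (q * k') % n → k = k' := by
    intro k hk k' hk' hEq
    rw [hTmem] at hk hk'
    have hmod : Nat.ModEq n (q * k) (q * k') := hEq
    have h2 : Nat.ModEq n (q ^ (m-1) * (q * k)) (q ^ (m-1) * (q * k')) := hmod.mul_left _
    have h3 : ∀ t : ℕ, q ^ (m-1) * (q * t) = q ^ m * t := by
      intro t
      rw [← mul_assoc, ← pow_succ]
      congr 2
      omega
    rw [h3 k, h3 k'] at h2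
    have hqm1 : Nat.ModEq n (q ^ m) 1 := by
      show q ^ m % n = 1 % n
      have : q ^ m = n + 1 := by omega
      rw [this, Nat.add_mod_left]
    have h4 : Nat.ModEq n k k' := by
      calc k ≡ 1 * k [MOD n] := by rw [one_mul]
      _ ≡ q ^ m * k [MOD n] := (hqm1.symm.mul_right k)
      _ ≡ q ^ m * k' [MOD n] := h2
      _ ≡ 1 * k' [MOD n] := (hqm1.mul_right k')
      _ = k' := one_mul k'
    have h5 : k % n = k' % n := h4
    rw [Nat.mod_eq_of_lt (by omega), Nat.mod_eq_of_lt (by omega)] at h5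
    exact h5
  have hgmap : g.map φ = g := by
    rw [hgdef, Polynomial.map_prod]
    have hfac : ∀ k ∈ T', (X - C (β ^ k)).map φ = X - C (β ^ ((q * k) % n)) := by
      intro k hk
      rw [Polynomial.map_sub, Polynomial.map_X, Polynomial.map_C, hφx, ← pow_mul,
        mul_comm k q]
      congr 2
      rw [← hβ, pow_mod_orderOf]
    rw [Finset.prod_congr rfl hfac]
    have himg : T'.image (fun k => (q * k) % n) = T' := by
      apply Finset.eq_of_subset_of_card_le
      · intro x hx
        obtain ⟨k, hk, rfl⟩ := Finset.mem_image.mp hx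
        exact hσmem k hk
      · exact le_of_eq (Finset.card_image_of_injOn
          (fun k hk k' hk' h => hσinj k hk k' hk' h)).symm
    calc ∏ k ∈ T', (X - C (β ^ ((q * k) % n)))
        = ∏ x ∈ T'.image (fun k => (q * k) % n), (X - C (β ^ x)) :=
          (Finset.prod_image (f := fun x => X - C (β ^ x))
            (fun k hk k' hk' h => hσinj k hk k' hk' h)).symm
      _ = ∏ k ∈ T', (X - C (β ^ k)) := by rw [himg]
  have hcoeff : ∀ i, g.coeff i ∈ Set.range (algebraMap F E) := by
    intro i
    apply mem_range_algebraMap_of_pow_card F E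
    rw [hF]
    have h := congrArg (fun P : Polynomial E => P.coeff i) hgmap
    simp only [Polynomial.coeff_map] at h
    rw [hφx] at h
    exact h
  have hlift : g ∈ Polynomial.lifts (algebraMap F E) :=
    (Polynomial.lifts_iff_coeff_lifts g).mpr hcoeff
  obtain ⟨g₀, hg₀⟩ := (Polynomial.mem_lifts g).mp hlift
  have hres := finrank_code n hn0 β (Tset q m j) T' hT hinj g₀ (by rw [hg₀])
    (by rw [hcard]; omega)
  rw [hres, hcard]
  omega
end
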